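/- Fix c ≥ 2. Then there exists a unique x* > 0 such that e^{x*}·K₀(x*) = −c·log(x*), and for every x with 0 < x < x*, one has eˣ·K₀(x) < −c·log(x). -/

import Mathlib

open Real MeasureTheory Set Filter

/-- Modified Bessel function of the second kind of order zero. -/
noncomputable def besselK0 (x : ℝ) : ℝ :=
  ∫ t in Set.Ioi (0:ℝ), Real.exp (-x * Real.cosh t)

namespace BK0aux

lemma self_le_cosh {t : ℝ} (ht : 0 ≤ t) : t ≤ Real.cosh t :=
  le_trans (Real.self_le_sinh_iff.2 ht) (by nlinarith [Real.cosh_sub_sinh t, Real.exp_pos (-t)])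

lemma mul_exp_neg_le {s u : ℝ} (hs : 0 < s) (hu : 0 ≤ u) : u * Real.exp (-(s*u)) ≤ 1 / s := by
  have h1 : s * u ≤ Real.exp (s * u) := by
    nlinarith [Real.add_one_le_exp (s * u)]
  have h2 : Real.exp (-(s*u)) = 1 / Real.exp (s*u) := by
    rw [Real.exp_neg]; ring
  rw [h2]
  have hE := Real.exp_pos (s*u)
  have heq : u * (1 / Real.exp (s*u)) = u / Real.exp (s*u) := by ring
  rw [heq, div_le_div_iff₀ hE hs]
  nlinarith

lemma integrable_exp (x : ℝ) (hx : 0 < x) :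
    IntegrableOn (fun t => Real.exp (-x * Real.cosh t)) (Set.Ioi 0) := by
  apply ((exp_neg_integrableOn_Ioi 0 hx)).mono' (Continuous.aestronglyMeasurable (by continuity))
  filter_upwards [ae_restrict_mem measurableSet_Ioi] with t ht
  rw [Real.norm_eq_abs, abs_of_pos (Real.exp_pos _)]
  apply Real.exp_le_exp.2
  have := self_le_cosh (le_of_lt ht)
  nlinarith

lemma integrable_cosh_exp (x : ℝ) (hx : 0 < x) :
    IntegrableOn (fun t => Real.cosh t * Real.exp (-x * Real.cosh t)) (Set.Ioi 0) := by
  have h2 : (0:ℝ) < x / 2 := by linarith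
  apply (((exp_neg_integrableOn_Ioi 0 h2)).const_mul (2/x)).mono'
    (Continuous.aestronglyMeasurable (by continuity))
  filter_upwards [ae_restrict_mem measurableSet_Ioi] with t ht
  have hc : (1:ℝ) ≤ Real.cosh t := Real.one_le_cosh t
  have hc0 : (0:ℝ) ≤ Real.cosh t := by linarith
  rw [Real.norm_eq_abs, abs_of_nonneg (by positivity)]
  have key : Real.cosh t * Real.exp (-(x/2 * Real.cosh t)) ≤ 2 / x := by
    have := mul_exp_neg_le h2 hc0
    calc Real.cosh t * Real.exp (-(x/2 * Real.cosh t)) ≤ 1 / (x/2) := this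
      _ = 2 / x := by field_simp
  have split : Real.exp (-x * Real.cosh t)
      = Real.exp (-(x/2 * Real.cosh t)) * Real.exp (-(x/2 * Real.cosh t)) := by
    rw [← Real.exp_add]; ring_nf
  rw [split]
  have hmono : Real.exp (-(x/2 * Real.cosh t)) ≤ Real.exp (-(x/2 * t)) := by
    apply Real.exp_le_exp.2
    have := self_le_cosh (le_of_lt ht)
    nlinarith
  calc Real.cosh t * (Real.exp (-(x/2 * Real.cosh t)) * Real.exp (-(x/2 * Real.cosh t)))
      = (Real.cosh t * Real.exp (-(x/2 * Real.cosh t))) * Real.exp (-(x/2 * Real.cosh t)) := by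
        ring
    _ ≤ (2/x) * Real.exp (-(x/2 * t)) := by
        apply mul_le_mul key hmono (le_of_lt (Real.exp_pos _)) (by positivity)
    _ = 2/x * Real.exp (-(x/2) * t) := by ring_nf

lemma integrable_sinh_exp (x : ℝ) (hx : 0 < x) :
    IntegrableOn (fun t => Real.sinh t * Real.exp (-x * Real.cosh t)) (Set.Ioi 0) := by
  apply (integrable_cosh_exp x hx).mono' (Continuous.aestronglyMeasurable (by continuity))
  filter_upwards [ae_restrict_mem measurableSet_Ioi] with t ht
  rw [Real.norm_eq_abs, abs_mul, abs_of_pos (Real.exp_pos _), Real.abs_sinh,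
    abs_of_pos ht]
  apply mul_le_mul_of_nonneg_right _ (le_of_lt (Real.exp_pos _))
  nlinarith [Real.cosh_sub_sinh t, Real.exp_pos (-t)]

lemma sinh_integral (x : ℝ) (hx : 0 < x) :
    ∫ t in Set.Ioi (0:ℝ), Real.sinh t * Real.exp (-x * Real.cosh t) = Real.exp (-x) / x := by
  have key := MeasureTheory.integral_Ioi_of_hasDerivAt_of_tendsto'
    (f := fun t => -(Real.exp (-x * Real.cosh t) / x))
    (f' := fun t => Real.sinh t * Real.exp (-x * Real.cosh t)) (a := 0) (m := 0)
    ?_ (integrable_sinh_exp x hx) ?_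
  · rw [key]
    simp [Real.cosh_zero]
  · intro t _
    have h1 : HasDerivAt (fun t => -x * Real.cosh t) (-x * Real.sinh t) t := by
      simpa using (Real.hasDerivAt_cosh t).const_mul (-x)
    have h2 := (h1.exp).div_const x
    have hx' : x ≠ 0 := ne_of_gt hx
    convert h2.neg using 1
    · rfl
    field_simp
  · have h1 : Filter.Tendsto (fun t : ℝ => -x * Real.cosh t) Filter.atTop Filter.atBot := by
      apply Filter.Tendsto.const_mul_atTop_of_neg (by linarith)
      apply Filter.tendsto_atTop_mono' Filter.atTop _ Filter.tendsto_id
      filter_upwards [Filter.eventually_ge_atTop (0:ℝ)] with t ht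
      exact self_le_cosh ht
    have h2 := Real.tendsto_exp_atBot.comp h1
    have h3 := (h2.div_const x).neg
    simpa using h3

lemma besselK0_pos (x : ℝ) (hx : 0 < x) : 0 < besselK0 x := by
  rw [besselK0]
  rw [MeasureTheory.setIntegral_pos_iff_support_of_nonneg_ae]
  · have : (Function.support fun t => Real.exp (-x * Real.cosh t)) = Set.univ := by
      ext t; simp [Function.support, (Real.exp_pos _).ne']
    rw [this, Set.univ_inter]
    simp [Real.volume_Ioi]
  · filter_upwards with t using le_of_lt (Real.exp_pos _)
  · exact integrable_exp x hx

lemma besselK0_hasDerivAt (x : ℝ) (hx : 0 < x) :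
    HasDerivAt besselK0 (-∫ t in Set.Ioi (0:ℝ), Real.cosh t * Real.exp (-x * Real.cosh t)) x := by
  have h2 : (0:ℝ) < x / 2 := by linarith
  have key := hasDerivAt_integral_of_dominated_loc_of_deriv_le (μ := volume.restrict (Set.Ioi 0))
    (F := fun y t => Real.exp (-y * Real.cosh t))
    (F' := fun y t => -(Real.cosh t * Real.exp (-y * Real.cosh t)))
    (x₀ := x) (s := Metric.ball x (x/2))
    (bound := fun t => Real.cosh t * Real.exp (-(x/2) * Real.cosh t))
    (Metric.ball_mem_nhds x h2) ?_ (integrable_exp x hx) ?_ ?_ (integrable_cosh_exp (x/2) h2) ?_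
  · have : HasDerivAt (fun y => ∫ t in Set.Ioi (0:ℝ), Real.exp (-y * Real.cosh t))
        (∫ t in Set.Ioi (0:ℝ), -(Real.cosh t * Real.exp (-x * Real.cosh t))) x := key.2
    rw [MeasureTheory.integral_neg] at this
    exact this
  · filter_upwards with y
    exact Continuous.aestronglyMeasurable (by continuity)
  · exact Continuous.aestronglyMeasurable (by continuity)
  · filter_upwards [ae_restrict_mem measurableSet_Ioi] with t ht
    intro y hy
    rw [Metric.mem_ball, Real.dist_eq, abs_lt] at hy
    have hy2 : x/2 ≤ y := by linarith [hy.1]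
    have hc : (1:ℝ) ≤ Real.cosh t := Real.one_le_cosh t
    rw [Real.norm_eq_abs, abs_neg, abs_mul, abs_of_nonneg (by linarith),
      abs_of_pos (Real.exp_pos _)]
    apply mul_le_mul_of_nonneg_left _ (by linarith)
    apply Real.exp_le_exp.2
    nlinarith
  · filter_upwards with t
    intro y _
    have h1 : HasDerivAt (fun y : ℝ => -y * Real.cosh t) (-Real.cosh t) y := by
      simpa using ((hasDerivAt_id y).neg.mul_const (Real.cosh t))
    have := h1.exp
    convert this using 1
    · rfl
    · rfl
    ring

/-- The auxiliary function. -/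
noncomputable def h (c x : ℝ) : ℝ := Real.exp x * besselK0 x + c * Real.log x

lemma h_hasDerivAt (c x : ℝ) (hx : 0 < x) :
    ∃ D, HasDerivAt (h c) D x ∧ (c - 1) / x ≤ D := by
  set I1 := ∫ t in Set.Ioi (0:ℝ), Real.cosh t * Real.exp (-x * Real.cosh t) with hI1
  have hK := besselK0_hasDerivAt x hx
  have hE := Real.hasDerivAt_exp x
  have hprod := hE.mul hK
  have hlog := (Real.hasDerivAt_log (ne_of_gt hx)).const_mul c
  have hsum := hprod.add hlog
  refine ⟨_, hsum, ?_⟩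
  -- need: exp x * (-I1) + exp x * besselK0 x + c * x⁻¹ ≥ (c-1)/x
  have key : I1 - besselK0 x ≤ Real.exp (-x) / x := by
    have hsub : I1 - besselK0 x
        = ∫ t in Set.Ioi (0:ℝ),
            (Real.cosh t * Real.exp (-x * Real.cosh t) - Real.exp (-x * Real.cosh t)) := by
      rw [besselK0, hI1, MeasureTheory.integral_sub (integrable_cosh_exp x hx)
        (integrable_exp x hx)]
    rw [hsub, ← sinh_integral x hx]
    apply MeasureTheory.setIntegral_mono_on
      ((integrable_cosh_exp x hx).sub (integrable_exp x hx))
      (integrable_sinh_exp x hx) measurableSet_Ioi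
    intro t ht
    have hst : Real.cosh t - 1 ≤ Real.sinh t := by
      nlinarith [Real.cosh_sub_sinh t, Real.exp_pos (-t), Real.exp_le_one_iff.2
        (by linarith [Set.mem_Ioi.1 ht] : -t ≤ 0)]
    simp only [Pi.sub_apply]
    nlinarith [Real.exp_pos (-x * Real.cosh t)]
  have hDge : Real.exp x * besselK0 x + Real.exp x * (-I1) + c * x⁻¹ ≥ (c - 1) / x := by
    have h1 : Real.exp x * (besselK0 x - I1) ≥ Real.exp x * (-(Real.exp (-x) / x)) := by
      apply mul_le_mul_of_nonneg_left _ (le_of_lt (Real.exp_pos _))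
      linarith
    have hEE : Real.exp x * Real.exp (-x) = 1 := by rw [← Real.exp_add]; simp
    have h2 : Real.exp x * (-(Real.exp (-x) / x)) = -(1/x) := by
      calc Real.exp x * (-(Real.exp (-x) / x)) = -((Real.exp x * Real.exp (-x))/x) := by ring
        _ = -(1/x) := by rw [hEE]
    have h3 : c * x⁻¹ = c / x := by field_simp
    have := h1
    rw [h2] at this
    have expand : Real.exp x * (besselK0 x - I1)
        = Real.exp x * besselK0 x + Real.exp x * (-I1) := by ring
    rw [expand] at this
    rw [h3]
    have : Real.exp x * besselK0 x + Real.exp x * (-I1) + c / x ≥ -(1/x) + c/x := by linarith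
    calc Real.exp x * besselK0 x + Real.exp x * (-I1) + c / x ≥ -(1/x) + c/x := this
      _ = (c - 1)/x := by field_simp; ring
  linarith [hDge]

lemma h_strictMonoOn (c : ℝ) (hc : 2 ≤ c) : StrictMonoOn (h c) (Set.Ioi 0) := by
  apply strictMonoOn_of_deriv_pos (convex_Ioi 0)
  · intro x hx
    exact ((h_hasDerivAt c x hx).choose_spec.1.continuousAt).continuousWithinAt
  · intro x hx
    rw [interior_Ioi] at hx
    obtain ⟨D, hD, hge⟩ := h_hasDerivAt c x hx
    rw [hD.deriv]
    have hx0 : (0:ℝ) < x := hx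
    have : (0:ℝ) < (c - 1) / x := div_pos (by linarith) hx0
    linarith

lemma h_continuousOn (c : ℝ) : ContinuousOn (h c) (Set.Ioi 0) := fun x hx =>
  ((h_hasDerivAt c x hx).choose_spec.1.continuousAt).continuousWithinAt

lemma besselK0_upper (x : ℝ) (hx : 0 < x) (hx1 : x ≤ 1) :
    besselK0 x ≤ 2 - Real.log x := by
  set T : ℝ := 1 - Real.log x with hT
  have hlog : Real.log x ≤ 0 := Real.log_nonpos (le_of_lt hx) hx1
  have hT1 : 1 ≤ T := by simp [hT]; linarith
  have hT0 : (0:ℝ) < T := by linarith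
  have hxeT : x * Real.exp T = Real.exp 1 := by
    rw [hT, Real.exp_sub, Real.exp_log hx]
    field_simp
  have hsplit : Set.Ioi (0:ℝ) = Set.Ioc 0 T ∪ Set.Ioi T :=
    (Set.Ioc_union_Ioi_eq_Ioi (le_of_lt hT0)).symm
  have hint := integrable_exp x hx
  have hint1 : IntegrableOn (fun t => Real.exp (-x * Real.cosh t)) (Set.Ioc 0 T) :=
    hint.mono_set Set.Ioc_subset_Ioi_self
  have hint2 : IntegrableOn (fun t => Real.exp (-x * Real.cosh t)) (Set.Ioi T) :=
    hint.mono_set (Set.Ioi_subset_Ioi (le_of_lt hT0))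
  have hdisj : Disjoint (Set.Ioc (0:ℝ) T) (Set.Ioi T) := Set.Ioc_disjoint_Ioi le_rfl
  have hunion : besselK0 x
      = (∫ t in Set.Ioc (0:ℝ) T, Real.exp (-x * Real.cosh t))
        + ∫ t in Set.Ioi T, Real.exp (-x * Real.cosh t) := by
    rw [besselK0, hsplit]
    exact MeasureTheory.setIntegral_union hdisj measurableSet_Ioi hint1 hint2
  have hb1 : (∫ t in Set.Ioc (0:ℝ) T, Real.exp (-x * Real.cosh t)) ≤ T := by
    have : (∫ t in Set.Ioc (0:ℝ) T, Real.exp (-x * Real.cosh t))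
        ≤ ∫ _ in Set.Ioc (0:ℝ) T, (1:ℝ) := by
      apply MeasureTheory.setIntegral_mono_on hint1
        (MeasureTheory.integrableOn_const (by simp [Real.volume_Ioc]))
        measurableSet_Ioc
      intro t _
      rw [show (1:ℝ) = Real.exp 0 by simp]
      apply Real.exp_le_exp.2
      nlinarith [Real.one_le_cosh t]
    calc (∫ t in Set.Ioc (0:ℝ) T, Real.exp (-x * Real.cosh t))
        ≤ ∫ _ in Set.Ioc (0:ℝ) T, (1:ℝ) := this
      _ = T := by
          simp [Real.volume_Ioc, ENNReal.toReal_ofReal (le_of_lt hT0), le_of_lt hT0]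
  have hb2 : (∫ t in Set.Ioi T, Real.exp (-x * Real.cosh t)) ≤ 1 := by
    have hpt : ∀ t ∈ Set.Ioi T, Real.exp (-x * Real.cosh t) ≤ Real.exp (T - 1) * Real.exp (-t) := by
      intro t ht
      have ht' : T ≤ t := le_of_lt ht
      have hcosh : Real.exp t / 2 ≤ Real.cosh t := by
        rw [Real.cosh_eq]
        have := Real.exp_pos (-t)
        linarith
      have hconv : Real.exp T * (1 + (t - T)) ≤ Real.exp t := by
        have h1 : (t - T) + 1 ≤ Real.exp (t - T) := Real.add_one_le_exp _
        have h2 : Real.exp t = Real.exp T * Real.exp (t - T) := by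
          rw [← Real.exp_add]; ring_nf
        rw [h2]
        have := Real.exp_pos T
        nlinarith
      have hkey : 1 + (t - T) ≤ x * Real.cosh t := by
        have he1 : (2:ℝ) ≤ Real.exp 1 := by
          have := Real.exp_one_gt_d9
          linarith
        have h3 : x * (Real.exp t / 2) ≤ x * Real.cosh t :=
          mul_le_mul_of_nonneg_left hcosh (le_of_lt hx)
        have h4 : x * Real.exp T * (1 + (t - T)) ≤ x * Real.exp t := by
          have := mul_le_mul_of_nonneg_left hconv (le_of_lt hx)
          nlinarith
        rw [hxeT] at h4
        nlinarith
      rw [← Real.exp_add]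
      apply Real.exp_le_exp.2
      linarith
    have hintc : IntegrableOn (fun t => Real.exp (T - 1) * Real.exp (-t)) (Set.Ioi T) := by
      apply MeasureTheory.Integrable.const_mul
      exact (show IntegrableOn (fun t => Real.exp (-t)) (Set.Ioi T) volume by simpa using exp_neg_integrableOn_Ioi T (by norm_num : (0:ℝ) < 1))
    calc (∫ t in Set.Ioi T, Real.exp (-x * Real.cosh t))
        ≤ ∫ t in Set.Ioi T, Real.exp (T - 1) * Real.exp (-t) :=
          MeasureTheory.setIntegral_mono_on hint2 hintc measurableSet_Ioi hpt
      _ = Real.exp (T - 1) * ∫ t in Set.Ioi T, Real.exp (-t) := by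
          rw [MeasureTheory.integral_const_mul]
      _ = Real.exp (T - 1) * Real.exp (-T) := by rw [integral_exp_neg_Ioi]
      _ = Real.exp (-1) := by rw [← Real.exp_add]; ring_nf
      _ ≤ 1 := Real.exp_le_one_iff.2 (by norm_num)
  rw [hunion, hT] at *
  linarith

end BK0aux

theorem besselK0_log_crossing (c : ℝ) (hc : 2 ≤ c) :
    ∃ xstar : ℝ, 0 < xstar ∧
      Real.exp xstar * besselK0 xstar = -c * Real.log xstar ∧
      (∀ y : ℝ, 0 < y → Real.exp y * besselK0 y = -c * Real.log y → y = xstar) ∧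
      ∀ x : ℝ, 0 < x → x < xstar → Real.exp x * besselK0 x < -c * Real.log x := by
  classical
  set a : ℝ := Real.exp (-20) with ha
  have ha0 : 0 < a := Real.exp_pos _
  have ha1 : a ≤ 1 := Real.exp_le_one_iff.2 (by norm_num)
  have hloga : Real.log a = -20 := by rw [ha, Real.log_exp]
  have hhc1 : 0 < BK0aux.h c 1 := by
    have hK := BK0aux.besselK0_pos 1 one_pos
    have : BK0aux.h c 1 = Real.exp 1 * besselK0 1 := by
      simp [BK0aux.h]
    rw [this]
    positivity
  have hhca : BK0aux.h c a < 0 := by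
    have hup := BK0aux.besselK0_upper a ha0 ha1
    have hK0pos := BK0aux.besselK0_pos a ha0
    have hahalf : a ≤ 1/2 := by
      have h1 : a ≤ Real.exp (-1) := Real.exp_le_exp.2 (by norm_num)
      have h2 : Real.exp (-1) * Real.exp 1 = 1 := by rw [← Real.exp_add]; norm_num
      nlinarith [Real.exp_one_gt_d9, Real.exp_pos (-1)]
    have hea : Real.exp a ≤ 1.7 := by
      have h1 : Real.exp a ≤ Real.exp (1/2) := Real.exp_le_exp.2 (by linarith)
      have h2 : Real.exp (1/2) * Real.exp (1/2) = Real.exp 1 := by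
        rw [← Real.exp_add]; norm_num
      nlinarith [Real.exp_one_lt_d9, Real.exp_pos (1/2 : ℝ)]
    have h1 : Real.exp a * besselK0 a ≤ Real.exp a * (2 - Real.log a) :=
      mul_le_mul_of_nonneg_left hup (le_of_lt (Real.exp_pos _))
    have h2 : Real.exp a * (2 - Real.log a) = Real.exp a * 22 := by rw [hloga]; ring
    have h3 : Real.exp a * 22 ≤ 37.4 := by nlinarith
    have h4 : c * (-20 : ℝ) ≤ -40 := by nlinarith
    have : BK0aux.h c a = Real.exp a * besselK0 a + c * Real.log a := rfl
    rw [this, hloga]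
    nlinarith
  have hmono := BK0aux.h_strictMonoOn c hc
  have hconta : ContinuousOn (BK0aux.h c) (Set.Icc a 1) :=
    (BK0aux.h_continuousOn c).mono (fun y hy => lt_of_lt_of_le ha0 hy.1)
  have hivt := intermediate_value_Icc ha1 hconta
  have h0mem : (0:ℝ) ∈ Set.Icc (BK0aux.h c a) (BK0aux.h c 1) :=
    ⟨le_of_lt hhca, le_of_lt hhc1⟩
  obtain ⟨xstar, hxmem, hxval⟩ := hivt h0mem
  have hxpos : 0 < xstar := lt_of_lt_of_le ha0 hxmem.1
  have hxIoi : xstar ∈ Set.Ioi (0:ℝ) := hxpos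
  refine ⟨xstar, hxpos, ?_, ?_, ?_⟩
  · have : BK0aux.h c xstar = 0 := hxval
    rw [BK0aux.h] at this
    linarith
  · intro y hy hyeq
    have hyh : BK0aux.h c y = 0 := by
      rw [BK0aux.h]; linarith
    exact hmono.injOn hy hxIoi (by rw [hyh, hxval])
  · intro x hx0 hxlt
    have := hmono hx0 hxIoi hxlt
    rw [hxval] at this
    have hxh : BK0aux.h c x < 0 := this
    rw [BK0aux.h] at hxh
    linarith
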